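/- Let E and K be finite types, N ∈ ℕ, h > 0. Let d i k : ℝ → ℝ satisfy d i k (0) = 0 and d i k (y) ≥ 0 for y ≥ 0, let s i : ℝ → ℝ, w i k > 0, R : Fin N → E → E → K → ℝ nonnegative, λ : Fin N → E → K → ℝ, and x⁰ : E → K → ℝ. Suppose (x̄, z̄, f̄) is feasible for the discrete-time relaxed MC-FNC problem, i.e., x̄ 0 = x⁰; x̄ (t+1) i k = x̄ t i k + h·(λ t i k + Σ_j f̄ t j i k − z̄ t i k); 0 ≤ x̄ t i k; 0 ≤ z̄ t i k ≤ d i k (x̄ t i k); Σ_{k} Σ_{j} f̄ t j i k ≤ s i (Σ_{k} w i k · x̄ t i k); f̄ t i j k = R t i j k · z̄ t i k; f̄ t i j k ≥ 0, for all t, i, j, k. Define α t i k = if d i k (x̄ t i k) = 0 then 1 else z̄ t i k / d i k (x̄ t i k), and γ t i = sSup { γ ∈ [0,1] : ∀ j ∈ E, (∃ k, R t i j k > 0) → γ · Σ_{k ∈ K} Σ_{h' ∈ E} R t h' j k · α t h' k · d h' k (x̄ t h' k) ≤ s j (Σ_{k ∈ K} w j k · x̄ t j k) }. Then for all t, i,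 k: 0 ≤ α t i k ≤ 1, γ t i = 1, and z̄ t i k = γ t i · α t i k · d i k (x̄ t i k); hence (x̄, z̄, f̄) is a trajectory of the controlled FIFO dynamics with control parameters α. -/
import Mathlib


/-- Tightness of the discrete-time relaxation: given a feasible point
`(x̄, z̄, f̄)` of the relaxed MC-FNC problem, the reconstructed controls
`α t i k = z̄ t i k / d i k (x̄ t i k)` (with the convention `α = 1` when the
demand vanishes) lie in `[0,1]`, the FIFO coefficients equal `1`, and
`z̄ t i k = γ t i * α t i k * d i k (x̄ t i k)`, so `(x̄, z̄, f̄)` is a trajectory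
of the controlled FIFO dynamics with controls `α`. -/
theorem tightness_reconstruction
    (E K : Type*) [Fintype E] [Fintype K] (N : ℕ)
    (h : ℝ) (hh : 0 < h)
    (d : E → K → ℝ → ℝ) (hd0 : ∀ i k, d i k 0 = 0)
    (hdpos : ∀ i k (y : ℝ), 0 ≤ y → 0 ≤ d i k y)
    (s : E → ℝ → ℝ)
    (w : E → K → ℝ) (hw : ∀ i k, 0 < w i k)
    (R : Fin N → E → E → K → ℝ) (hR : ∀ t i j k, 0 ≤ R t i j k)
    (lam : Fin N → E → K → ℝ) (x0 : E → K → ℝ)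
    (xb : Fin (N + 1) → E → K → ℝ) (zb : Fin N → E → K → ℝ)
    (fb : Fin N → E → E → K → ℝ)
    (hinit : xb 0 = x0)
    (hupd : ∀ (t : Fin N) i k, xb t.succ i k = xb t.castSucc i k +
      h * (lam t i k + (∑ j, fb t j i k) - zb t i k))
    (hxnn : ∀ t i k, 0 ≤ xb t i k)
    (hzd : ∀ (t : Fin N) i k,
      0 ≤ zb t i k ∧ zb t i k ≤ d i k (xb t.castSucc i k))
    (hsup : ∀ (t : Fin N) i,
      (∑ k, ∑ j, fb t j i k) ≤ s i (∑ k, w i k * xb t.castSucc i k))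
    (hfR : ∀ (t : Fin N) i j k, fb t i j k = R t i j k * zb t i k)
    (hfnn : ∀ (t : Fin N) i j k, 0 ≤ fb t i j k)
    (α : Fin N → E → K → ℝ)
    (hα : ∀ (t : Fin N) i k, α t i k =
      if d i k (xb t.castSucc i k) = 0 then 1
      else zb t i k / d i k (xb t.castSucc i k))
    (γ : Fin N → E → ℝ)
    (hγ : ∀ (t : Fin N) i, γ t i =
      sSup {g : ℝ | 0 ≤ g ∧ g ≤ 1 ∧ ∀ j, (∃ k, 0 < R t i j k) →
        g * (∑ k, ∑ h', R t h' j k * (α t h' k * d h' k (xb t.castSucc h' k)))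
          ≤ s j (∑ k, w j k * xb t.castSucc j k)}) :
    ∀ (t : Fin N) i k, (0 ≤ α t i k ∧ α t i k ≤ 1) ∧ γ t i = 1 ∧
      zb t i k = γ t i * (α t i k * d i k (xb t.castSucc i k)) := by
  -- key fact: α t i k * d i k (xb t.castSucc i k) = zb t i k
  have key : ∀ (t : Fin N) i k,
      α t i k * d i k (xb t.castSucc i k) = zb t i k := by
    intro t i k
    rw [hα]
    by_cases hdz : d i k (xb t.castSucc i k) = 0
    · simp [hdz]
      have h1 := (hzd t i k).1
      have h2 := (hzd t i k).2
      rw [hdz] at h2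
      linarith
    · simp [hdz]
  intro t i k
  have hdnn : 0 ≤ d i k (xb t.castSucc i k) := hdpos i k _ (hxnn _ i k)
  have hαb : 0 ≤ α t i k ∧ α t i k ≤ 1 := by
    rw [hα]
    by_cases hdz : d i k (xb t.castSucc i k) = 0
    · simp [hdz]
    · simp [hdz]
      have hdp : 0 < d i k (xb t.castSucc i k) := lt_of_le_of_ne hdnn (Ne.symm hdz)
      constructor
      · exact div_nonneg (hzd t i k).1 hdnn
      · rw [div_le_one hdp]; exact (hzd t i k).2
  have hγ1 : γ t i = 1 := by
    rw [hγ]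
    have hmem1 : (1 : ℝ) ∈ {g : ℝ | 0 ≤ g ∧ g ≤ 1 ∧ ∀ j, (∃ k, 0 < R t i j k) →
        g * (∑ k, ∑ h', R t h' j k * (α t h' k * d h' k (xb t.castSucc h' k)))
          ≤ s j (∑ k, w j k * xb t.castSucc j k)} := by
      refine ⟨zero_le_one, le_refl 1, fun j _ => ?_⟩
      rw [one_mul]
      have := hsup t j
      calc (∑ k, ∑ h', R t h' j k * (α t h' k * d h' k (xb t.castSucc h' k)))
          = ∑ k, ∑ h', fb t h' j k := by
            apply Finset.sum_congr rfl; intro k _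
            apply Finset.sum_congr rfl; intro h' _
            rw [key t h' k, hfR]
        _ ≤ s j (∑ k, w j k * xb t.castSucc j k) := hsup t j
    apply le_antisymm
    · exact csSup_le ⟨1, hmem1⟩ (fun g hg => hg.2.1)
    · exact le_csSup ⟨1, fun g hg => hg.2.1⟩ hmem1
  exact ⟨hαb, hγ1, by rw [hγ1, one_mul, key]⟩
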